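/- In the free group F on two generators u, v, let w be any word and set r = w u w⁻¹ v⁻¹ and l = w* w, where w* denotes the word w written in reverse. Suppose moreover that u w* v⁻¹ (w*)⁻¹ = g r g⁻¹ for some g ∈ F. Then the commutator identity [l, u] = [w*, r]·[r, g] holds in F, where [a,b] = a b a⁻¹ b⁻¹. -/

import Mathlib

open scoped commutatorElement

theorem commutator_identity (u v w wstar g r l : FreeGroup Bool)
    (hu : u = FreeGroup.of false) (hv : v = FreeGroup.of true)
    (hr : r = w * u * w⁻¹ * v⁻¹) (hl : l = wstar * w)
    (hconj : u * wstar * v⁻¹ * wstar⁻¹ = g * r * g⁻¹) :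
    ⁅l, u⁆ = ⁅wstar, r⁆ * ⁅r, g⁆ := by
  have hw : w * u * w⁻¹ = r * v := by rw [hr]; group
  have hkey : v * wstar⁻¹ * u⁻¹ = wstar⁻¹ * g * r⁻¹ * g⁻¹ := by
    have := congrArg (·⁻¹) hconj
    simp only [mul_inv_rev, inv_inv] at this
    calc v * wstar⁻¹ * u⁻¹ = wstar⁻¹ * (wstar * (v * (wstar⁻¹ * u⁻¹))) := by group
    _ = wstar⁻¹ * (g * (r⁻¹ * g⁻¹)) := by rw [this]
    _ = wstar⁻¹ * g * r⁻¹ * g⁻¹ := by group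
  calc ⁅l, u⁆ = wstar * (w * u * w⁻¹) * wstar⁻¹ * u⁻¹ := by rw [hl, commutatorElement_def]; group
  _ = wstar * r * (v * wstar⁻¹ * u⁻¹) := by rw [hw]; group
  _ = wstar * r * (wstar⁻¹ * g * r⁻¹ * g⁻¹) := by rw [hkey]
  _ = ⁅wstar, r⁆ * ⁅r, g⁆ := by simp [commutatorElement_def]; group
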